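/- Let n ≥ 2 and let G₁ and G₂ be simple graphs on Fin n. Then G₁ and G₂ are isomorphic if and only if there exists a permutation σ of Fin n such that the coordinate-permutation isometry M_σ satisfies M_σ '' S(G₁) = S(G₂), where S(G) = {s i : i ∈ Fin n} ∪ {(s i + s j)/2 : G.Adj i j} is the point-set form of G built from the centered standard simplex vertices s. Equivalently, G₁ ≅ G₂ if and only if there exists σ with {(s (σ i) + s (σ j))/2 : G₁.Adj i j} = {(s i + s j)/2 : G₂.Adj i j}. -/

import Mathlib

/-- The centered standard simplex vertices: `s i = e_i - (1/n) • ∑ j, e_j`,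
where `e_i` is the standard basis of `EuclideanSpace ℝ (Fin n)`. -/
noncomputable def simplexPt (n : ℕ) (i : Fin n) : EuclideanSpace ℝ (Fin n) :=
  EuclideanSpace.single i (1 : ℝ) - ((1 : ℝ) / n) • ∑ j, EuclideanSpace.single j (1 : ℝ)

/-- The coordinate-permutation map `M_σ` (the permutation matrix of `σ`), as a linear
isometry equivalence of `EuclideanSpace ℝ (Fin n)`. -/
noncomputable def Mperm (n : ℕ) (σ : Equiv.Perm (Fin n)) :
    EuclideanSpace ℝ (Fin n) ≃ₗᵢ[ℝ] EuclideanSpace ℝ (Fin n) :=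
  LinearIsometryEquiv.piLpCongrLeft 2 ℝ ℝ σ

/-- The point-set form of a simple graph `G` on `Fin n`:
`S(G) = {s i : i} ∪ {(s i + s j)/2 : G.Adj i j}`. -/
noncomputable def pointSet (n : ℕ) (G : SimpleGraph (Fin n)) :
    Set (EuclideanSpace ℝ (Fin n)) :=
  Set.range (simplexPt n) ∪
    {p | ∃ i j : Fin n, G.Adj i j ∧ p = (2 : ℝ)⁻¹ • (simplexPt n i + simplexPt n j)}

lemma sum_single_apply (n : ℕ) (m : Fin n) :
    (∑ j, EuclideanSpace.single j (1 : ℝ)) m = 1 := by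
  have : (∑ j, EuclideanSpace.single j (1 : ℝ)) m
      = ∑ j, EuclideanSpace.single j (1 : ℝ) m :=
    by rw [WithLp.ofLp_sum, Finset.sum_apply]
  simp [this, EuclideanSpace.single_apply]

lemma simplexPt_apply (n : ℕ) (i m : Fin n) :
    simplexPt n i m = (if m = i then 1 else 0) - 1/n := by
  simp [simplexPt, EuclideanSpace.single_apply, sum_single_apply]

lemma Mperm_apply (n : ℕ) (σ : Equiv.Perm (Fin n)) (x : EuclideanSpace ℝ (Fin n)) (m : Fin n) :
    Mperm n σ x m = x (σ.symm m) := by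
  simp [Mperm, LinearIsometryEquiv.piLpCongrLeft_apply, Equiv.piCongrLeft'_apply]

lemma Mperm_simplexPt (n : ℕ) (σ : Equiv.Perm (Fin n)) (i : Fin n) :
    Mperm n σ (simplexPt n i) = simplexPt n (σ i) := by
  ext m
  rw [Mperm_apply, simplexPt_apply, simplexPt_apply]
  by_cases h : m = σ i
  · simp [h]
  · rw [if_neg h, if_neg (fun hh : σ.symm m = i => h (σ.symm_apply_eq.mp hh))]

lemma mid_eq_mid (n : ℕ) {i j k l : Fin n} (hij : i ≠ j) (hkl : k ≠ l)
    (h : (2 : ℝ)⁻¹ • (simplexPt n i + simplexPt n j)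
        = (2 : ℝ)⁻¹ • (simplexPt n k + simplexPt n l)) :
    (k = i ∧ l = j) ∨ (k = j ∧ l = i) := by
  have h' : simplexPt n i + simplexPt n j = simplexPt n k + simplexPt n l := by
    have := congrArg (fun x => (2 : ℝ) • x) h
    simpa [smul_smul] using this
  have hm : ∀ m : Fin n, ((if m = i then (1:ℝ) else 0) + (if m = j then (1:ℝ) else 0))
      = ((if m = k then (1:ℝ) else 0) + (if m = l then (1:ℝ) else 0)) := by
    intro m
    have := congrArg (fun x => x m) h'
    simp only [PiLp.add_apply, simplexPt_apply] at this
    linarith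
  have hk := hm k
  have hl := hm l
  rw [if_pos rfl, if_neg hkl] at hk
  rw [if_neg (fun h : l = k => hkl h.symm), if_pos rfl] at hl
  by_cases h1 : k = i
  · by_cases h2 : l = j
    · exact Or.inl ⟨h1, h2⟩
    · rw [if_neg h2] at hl
      by_cases h3 : l = i
      · exact absurd (h1.trans h3.symm) hkl
      · rw [if_neg h3] at hl; norm_num at hl
  · rw [if_neg h1] at hk
    by_cases h2 : k = j
    · by_cases h3 : l = i
      · exact Or.inr ⟨h2, h3⟩
      · rw [if_neg h3] at hl
        by_cases h4 : l = j
        · exact absurd (h2.trans h4.symm) hkl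
        · rw [if_neg h4] at hl; norm_num at hl
    · rw [if_neg h2] at hk; norm_num at hk

lemma simplexPt_ne_mid (n : ℕ) {a k l : Fin n} (hkl : k ≠ l) :
    simplexPt n a ≠ (2 : ℝ)⁻¹ • (simplexPt n k + simplexPt n l) := by
  intro h
  have hk := congrArg (fun x => x k) h
  simp only [PiLp.smul_apply, PiLp.add_apply, simplexPt_apply, smul_eq_mul,
    eq_self_iff_true, if_true] at hk
  rw [if_neg hkl] at hk
  by_cases hak : k = a
  · rw [if_pos hak] at hk; linarith
  · rw [if_neg hak] at hk; linarith

lemma midSet_eq_iff_adj (n : ℕ) (σ : Equiv.Perm (Fin n)) (G₁ G₂ : SimpleGraph (Fin n))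
    (h : {p | ∃ i j : Fin n, G₁.Adj i j ∧
            p = (2 : ℝ)⁻¹ • (simplexPt n (σ i) + simplexPt n (σ j))} =
        {p | ∃ i j : Fin n, G₂.Adj i j ∧
            p = (2 : ℝ)⁻¹ • (simplexPt n i + simplexPt n j)}) :
    ∀ i j, G₁.Adj i j ↔ G₂.Adj (σ i) (σ j) := by
  intro i j
  constructor
  · intro hadj
    have : (2 : ℝ)⁻¹ • (simplexPt n (σ i) + simplexPt n (σ j)) ∈
        {p | ∃ i j : Fin n, G₂.Adj i j ∧
            p = (2 : ℝ)⁻¹ • (simplexPt n i + simplexPt n j)} := by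
      rw [← h]; exact ⟨i, j, hadj, rfl⟩
    obtain ⟨k, l, hkl, he⟩ := this
    have hσ : σ i ≠ σ j := fun hh => hadj.ne (σ.injective hh)
    rcases mid_eq_mid n hσ hkl.ne he with ⟨h1, h2⟩ | ⟨h1, h2⟩
    · rwa [← h1, ← h2]
    · rw [← h1, ← h2]; exact hkl.symm
  · intro hadj
    have : (2 : ℝ)⁻¹ • (simplexPt n (σ i) + simplexPt n (σ j)) ∈
        {p | ∃ a b : Fin n, G₁.Adj a b ∧
            p = (2 : ℝ)⁻¹ • (simplexPt n (σ a) + simplexPt n (σ b))} := by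
      rw [h]; exact ⟨σ i, σ j, hadj, rfl⟩
    obtain ⟨a, b, hab, he⟩ := this
    have hσab : σ a ≠ σ b := fun hh => hab.ne (σ.injective hh)
    have hσij : σ i ≠ σ j := hadj.ne
    rcases mid_eq_mid n hσij hσab he with ⟨h1, h2⟩ | ⟨h1, h2⟩
    · rw [σ.injective h1, σ.injective h2] at hab; exact hab
    · rw [σ.injective h1, σ.injective h2] at hab; exact hab.symm

lemma image_pointSet (n : ℕ) (σ : Equiv.Perm (Fin n)) (G : SimpleGraph (Fin n)) :
    Mperm n σ '' pointSet n G =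
      Set.range (simplexPt n) ∪
        {p | ∃ i j : Fin n, G.Adj i j ∧
            p = (2 : ℝ)⁻¹ • (simplexPt n (σ i) + simplexPt n (σ j))} := by
  rw [pointSet, Set.image_union]
  congr 1
  · ext p
    constructor
    · rintro ⟨q, ⟨a, rfl⟩, rfl⟩
      exact ⟨σ a, (Mperm_simplexPt n σ a).symm⟩
    · rintro ⟨a, rfl⟩
      exact ⟨simplexPt n (σ.symm a), ⟨σ.symm a, rfl⟩, by
        rw [Mperm_simplexPt]; simp⟩
  · ext p
    constructor
    · rintro ⟨q, ⟨i, j, hadj, rfl⟩, rfl⟩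
      refine ⟨i, j, hadj, ?_⟩
      rw [map_smul, map_add, Mperm_simplexPt, Mperm_simplexPt]
    · rintro ⟨i, j, hadj, rfl⟩
      exact ⟨(2 : ℝ)⁻¹ • (simplexPt n i + simplexPt n j), ⟨i, j, hadj, rfl⟩, by
        rw [map_smul, map_add, Mperm_simplexPt, Mperm_simplexPt]⟩

lemma union_eq_iff (n : ℕ) (M₁ M₂ : Set (EuclideanSpace ℝ (Fin n)))
    (h₁ : Disjoint (Set.range (simplexPt n)) M₁)
    (h₂ : Disjoint (Set.range (simplexPt n)) M₂) :
    Set.range (simplexPt n) ∪ M₁ = Set.range (simplexPt n) ∪ M₂ ↔ M₁ = M₂ := by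
  constructor
  · intro h
    ext p
    constructor
    · intro hp
      have hmem : p ∈ Set.range (simplexPt n) ∪ M₂ := by rw [← h]; exact Or.inr hp
      rcases hmem with hr | hm
      · exact (h₁.ne_of_mem hr hp rfl).elim
      · exact hm
    · intro hp
      have hmem : p ∈ Set.range (simplexPt n) ∪ M₁ := by rw [h]; exact Or.inr hp
      rcases hmem with hr | hm
      · exact (h₂.ne_of_mem hr hp rfl).elim
      · exact hm
  · intro h; rw [h]

lemma disjoint_midSet (n : ℕ) (f : Fin n → Fin n) (G : SimpleGraph (Fin n))
    (hf : Function.Injective f) :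
    Disjoint (Set.range (simplexPt n))
      {p | ∃ i j : Fin n, G.Adj i j ∧
          p = (2 : ℝ)⁻¹ • (simplexPt n (f i) + simplexPt n (f j))} := by
  rw [Set.disjoint_left]
  rintro p ⟨a, rfl⟩ ⟨i, j, hadj, he⟩
  exact simplexPt_ne_mid n (fun hh => hadj.ne (hf hh)) he

theorem isomorphic_iff_exists_perm_registration
    (n : ℕ) (hn : 2 ≤ n) (G₁ G₂ : SimpleGraph (Fin n)) :
    (Nonempty (G₁ ≃g G₂) ↔
      ∃ σ : Equiv.Perm (Fin n), Mperm n σ '' pointSet n G₁ = pointSet n G₂) ∧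
    (Nonempty (G₁ ≃g G₂) ↔
      ∃ σ : Equiv.Perm (Fin n),
        {p | ∃ i j : Fin n, G₁.Adj i j ∧
            p = (2 : ℝ)⁻¹ • (simplexPt n (σ i) + simplexPt n (σ j))} =
        {p | ∃ i j : Fin n, G₂.Adj i j ∧
            p = (2 : ℝ)⁻¹ • (simplexPt n i + simplexPt n j)}) := by
  have hAC : (Nonempty (G₁ ≃g G₂)) ↔
      ∃ σ : Equiv.Perm (Fin n),
        {p | ∃ i j : Fin n, G₁.Adj i j ∧
            p = (2 : ℝ)⁻¹ • (simplexPt n (σ i) + simplexPt n (σ j))} =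
        {p | ∃ i j : Fin n, G₂.Adj i j ∧
            p = (2 : ℝ)⁻¹ • (simplexPt n i + simplexPt n j)} := by
    constructor
    · rintro ⟨φ⟩
      refine ⟨φ.toEquiv, ?_⟩
      ext p
      constructor
      · rintro ⟨i, j, hadj, rfl⟩
        exact ⟨φ i, φ j, φ.map_adj_iff.mpr hadj, rfl⟩
      · rintro ⟨i, j, hadj, rfl⟩
        refine ⟨φ.symm i, φ.symm j, φ.symm.map_adj_iff.mpr hadj, ?_⟩
        have e1 : φ.toEquiv (φ.symm i) = i := φ.apply_symm_apply i
        have e2 : φ.toEquiv (φ.symm j) = j := φ.apply_symm_apply j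
        rw [e1, e2]
    · rintro ⟨σ, h⟩
      have hadj := midSet_eq_iff_adj n σ G₁ G₂ h
      exact ⟨⟨σ, fun {i j} => (hadj i j).symm⟩⟩
  have hBC : (∃ σ : Equiv.Perm (Fin n), Mperm n σ '' pointSet n G₁ = pointSet n G₂) ↔
      ∃ σ : Equiv.Perm (Fin n),
        {p | ∃ i j : Fin n, G₁.Adj i j ∧
            p = (2 : ℝ)⁻¹ • (simplexPt n (σ i) + simplexPt n (σ j))} =
        {p | ∃ i j : Fin n, G₂.Adj i j ∧
            p = (2 : ℝ)⁻¹ • (simplexPt n i + simplexPt n j)} := by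
    apply exists_congr
    intro σ
    rw [image_pointSet]
    conv_lhs => rw [pointSet]
    exact union_eq_iff n _ _ (disjoint_midSet n σ G₁ σ.injective)
      (disjoint_midSet n id G₂ (fun a b h => h))
  exact ⟨hAC.trans hBC.symm, hAC⟩
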